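/- Suppose f : [0,T] → V* is continuously differentiable, (u,(y_i),(p_i)) solves the multiple-network system, and (ū,(ȳ_i),(p̄_i)) solves the delay network system with each p̄_i twice continuously differentiable on [−τ,T], where u(0) = ū(0), y_i(0) = ȳ_i(0) and p_i(0) = p̄_i(0) for all i. Then there are constants C₁ and C₂ depending only on c_a, c_c and the constants C_{d_i}, C_{d̂_i} (in particular independent of τ and t) such that for all t ∈ [0,T]: ‖ū(t) − u(t)‖_V² + Σ_{i=1}^m ‖p̄_i(t) − p_i(t)‖_Q² + Σ_{i=1}^m ∫₀ᵗ ‖ȳ_i(s) − y_i(s)‖_{H_Z}² ds ≤ C₁ · τ² · m · (1 + e^{C₂ (1 + 4 m² β²) t}) · P̄, where P̄ := Σ_{i=1}^m ∫₀^T ‖p̄_i′(s)‖_Q² ds + (1 + τ²) · T · Σ_{i=1}^m sup_{s ∈ [−τ,T]} ‖p̄_i″(s)‖_Q². -/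

import Mathlib

open Set

section auxlemmas

lemma aux_mono_of_deriv_nonneg {a b : ℝ} {F F' : ℝ → ℝ}
    (hF : ∀ t ∈ Icc a b, HasDerivWithinAt F (F' t) (Icc a b) t)
    (h' : ∀ t ∈ Icc a b, 0 ≤ F' t) :
    ∀ t ∈ Icc a b, F a ≤ F t := by
  intro t ht
  have hcont : ContinuousOn F (Icc a b) := fun x hx => (hF x hx).continuousWithinAt
  have hmono : MonotoneOn F (Icc a b) := by
    apply monotoneOn_of_deriv_nonneg (convex_Icc a b) hcont
    · intro x hx
      rw [interior_Icc] at hx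
      exact ((hF x (Ioo_subset_Icc_self hx)).hasDerivAt
        (Icc_mem_nhds hx.1 hx.2)).differentiableAt.differentiableWithinAt
    · intro x hx
      rw [interior_Icc] at hx
      rw [((hF x (Ioo_subset_Icc_self hx)).hasDerivAt (Icc_mem_nhds hx.1 hx.2)).deriv]
      exact h' x (Ioo_subset_Icc_self hx)
  exact hmono (left_mem_Icc.2 (ht.1.trans ht.2)) ht ht.1

lemma aux_ftc1 {T : ℝ} {h : ℝ → ℝ} (hc : ContinuousOn h (Icc 0 T)) :
    ∀ t ∈ Icc (0:ℝ) T, HasDerivWithinAt (fun u => ∫ s in (0:ℝ)..u, h s) (h t) (Icc 0 T) t := by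
  intro t ht
  haveI : Fact (t ∈ Icc (0:ℝ) T) := ⟨ht⟩
  have hint : IntervalIntegrable h MeasureTheory.volume 0 t := by
    apply ContinuousOn.intervalIntegrable
    apply hc.mono
    rw [uIcc_of_le ht.1]
    exact Icc_subset_Icc le_rfl ht.2
  exact intervalIntegral.integral_hasDerivWithinAt_right hint
    (hc.stronglyMeasurableAtFilter_nhdsWithin measurableSet_Icc t) (hc t ht)

lemma aux_gronwall {T A lam : ℝ} (hlam : 1 ≤ lam) {φ : ℝ → ℝ}
    (hφ : ContinuousOn φ (Icc 0 T))
    (h : ∀ t ∈ Icc (0:ℝ) T, φ t ≤ A + lam * ∫ s in (0:ℝ)..t, φ s) :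
    ∀ t ∈ Icc (0:ℝ) T, φ t ≤ A * Real.exp (lam * t) := by
  have hlam0 : 0 < lam := lt_of_lt_of_le one_pos hlam
  set ψ : ℝ → ℝ := fun t => Real.exp (-lam * t) * (∫ s in (0:ℝ)..t, φ s)
      - A / lam * (1 - Real.exp (-lam * t)) with hψ
  have hiD : ∀ t ∈ Icc (0:ℝ) T,
      HasDerivWithinAt (fun u => ∫ s in (0:ℝ)..u, φ s) (φ t) (Icc 0 T) t := aux_ftc1 hφ
  have hψD : ∀ t ∈ Icc (0:ℝ) T, HasDerivWithinAt ψ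
      (Real.exp (-lam * t) * (φ t - lam * (∫ s in (0:ℝ)..t, φ s) - A)) (Icc 0 T) t := by
    intro t ht
    have h1 : HasDerivWithinAt (fun u => Real.exp (-lam * u)) (-lam * Real.exp (-lam * t))
        (Icc 0 T) t := by
      simpa [mul_comm] using ((hasDerivAt_id t).const_mul (-lam)).exp.hasDerivWithinAt
    have := (h1.mul (hiD t ht)).sub
      (((h1.const_sub 1).const_mul (A / lam)))
    refine HasDerivWithinAt.congr_deriv this ?_
    have hA : A / lam * lam = A := div_mul_cancel₀ A hlam0.ne'
    linear_combination (-Real.exp (-lam * t)) * hA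
  have hψ0 : ∀ t ∈ Icc (0:ℝ) T, ψ t ≤ ψ 0 := by
    have := aux_mono_of_deriv_nonneg (F := fun t => -ψ t)
      (F' := fun t => -(Real.exp (-lam * t) * (φ t - lam * (∫ s in (0:ℝ)..t, φ s) - A)))
      (fun t ht => (hψD t ht).neg)
      (fun t ht => by
        have h2 := h t ht
        have h3 : φ t - lam * (∫ s in (0:ℝ)..t, φ s) - A ≤ 0 := by linarith
        have h4 := mul_nonpos_of_nonneg_of_nonpos
          (le_of_lt (Real.exp_pos (-lam * t))) h3
        simpa using neg_nonneg.mpr h4)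
    intro t ht
    have h9 : -ψ 0 ≤ -ψ t := this t ht
    linarith
  intro t ht
  have h2 := hψ0 t ht
  rw [hψ] at h2
  simp only [intervalIntegral.integral_same, mul_zero, neg_mul, neg_zero, Real.exp_zero] at h2
  have hexp : 0 < Real.exp (-(lam * t)) := Real.exp_pos _
  have hint : lam * (∫ s in (0:ℝ)..t, φ s) ≤ A * (Real.exp (lam * t) - 1) := by
    have h3 : Real.exp (-(lam * t)) * (∫ s in (0:ℝ)..t, φ s)
        ≤ A / lam * (1 - Real.exp (-(lam * t))) := by linarith
    have h4 := mul_le_mul_of_nonneg_left h3 (le_of_lt (Real.exp_pos (lam * t)))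
    rw [← mul_assoc, ← Real.exp_add] at h4
    simp only [add_neg_cancel, Real.exp_zero, one_mul] at h4
    have hne : Real.exp (lam * t) ≠ 0 := (Real.exp_pos _).ne'
    have h5 : Real.exp (lam * t) * (A / lam * (1 - Real.exp (-(lam * t))))
        = A / lam * (Real.exp (lam * t) - 1) := by
      rw [Real.exp_neg]
      field_simp
    rw [h5] at h4
    calc lam * (∫ s in (0:ℝ)..t, φ s) ≤ lam * (A / lam * (Real.exp (lam * t) - 1)) := by
          exact mul_le_mul_of_nonneg_left h4 hlam0.le
      _ = A * (Real.exp (lam * t) - 1) := by field_simp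
  have h6 := h t ht
  linarith

lemma aux_young {x y cc : ℝ} (hcc : 0 < cc) : x*y ≤ cc/2*y^2 + x^2/(2*cc) := by
  have h2 : cc/2*y^2 + x^2/(2*cc) - x*y = (cc*y - x)^2/(2*cc) := by field_simp; ring
  have h3 : 0 ≤ (cc*y - x)^2/(2*cc) := by positivity
  linarith

lemma aux_young' {x y cc : ℝ} (hcc : 0 < cc) : x*y ≤ cc*y^2 + x^2/(4*cc) := by
  have h2 : cc*y^2 + x^2/(4*cc) - x*y = (2*cc*y - x)^2/(4*cc) := by field_simp; ring
  have h3 : 0 ≤ (2*cc*y - x)^2/(4*cc) := by positivity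
  linarith

lemma aux_X {B C : ℝ} (hB : 0 ≤ B) (hC : 0 < C) :
    (1 + B*C) ≤ (3+2*C)*(1+B) ∧ 2*(1+B*C)+1 ≤ (3+2*C)*(1+B) := by
  constructor <;> nlinarith [mul_nonneg hB hC.le]

end auxlemmas
set_option maxHeartbeats 8000000 in
open scoped RealInnerProductSpace in
theorem stmt5 {V Z HZ Q : Type*}
    [NormedAddCommGroup V] [InnerProductSpace ℝ V] [CompleteSpace V]
    [NormedAddCommGroup Z] [InnerProductSpace ℝ Z] [CompleteSpace Z]
    [NormedAddCommGroup HZ] [InnerProductSpace ℝ HZ] [CompleteSpace HZ]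
    [NormedAddCommGroup Q] [InnerProductSpace ℝ Q] [CompleteSpace Q]
    -- continuous embedding Z ↪ H_Z
    (ιZ : Z →L[ℝ] HZ) (hιZ : Function.Injective ιZ)
    (C_ZH : ℝ) (hCZH : ∀ z : Z, ‖ιZ z‖ ≤ C_ZH * ‖z‖)
    -- number of networks
    (m : ℕ) (hm : 1 ≤ m)
    -- the bilinear forms and their constants
    (a : V →ₗ[ℝ] V →ₗ[ℝ] ℝ) (c : Q →ₗ[ℝ] Q →ₗ[ℝ] ℝ)
    (d : Fin m → V →ₗ[ℝ] Q →ₗ[ℝ] ℝ) (dhat : Fin m → Z →ₗ[ℝ] Q →ₗ[ℝ] ℝ)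
    (c_a C_a c_c C_c : ℝ) (C_d C_dhat : Fin m → ℝ)
    (hc_a : 0 < c_a) (hc_c : 0 < c_c)
    (ha_symm : ∀ u v : V, a u v = a v u)
    (ha_coer : ∀ v : V, c_a * ‖v‖ ^ 2 ≤ a v v)
    (ha_bdd : ∀ u v : V, |a u v| ≤ C_a * ‖u‖ * ‖v‖)
    (hc_symm : ∀ p q : Q, c p q = c q p)
    (hc_coer : ∀ q : Q, c_c * ‖q‖ ^ 2 ≤ c q q)
    (hc_bdd : ∀ p q : Q, |c p q| ≤ C_c * ‖p‖ * ‖q‖)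
    (hd_bdd : ∀ (i : Fin m) (v : V) (q : Q), |d i v q| ≤ C_d i * ‖v‖ * ‖q‖)
    (hdhat_bdd : ∀ (i : Fin m) (z : Z) (q : Q), |dhat i z q| ≤ C_dhat i * ‖z‖ * ‖q‖) :
    ∃ C₁ C₂ : ℝ, 0 < C₁ ∧ 0 < C₂ ∧
      ∀ (T τ β : ℝ), 0 < T → 0 < τ → 0 ≤ β →
      ∀ (βm : Fin m → Fin m → ℝ), (∀ i j : Fin m, i ≠ j → |βm i j| ≤ β) →
      ∀ (f f' : ℝ → V →L[ℝ] ℝ) (g : Fin m → ℝ → Q →L[ℝ] ℝ)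
        (u u' : ℝ → V) (y y' : Fin m → ℝ → Z) (p p' : Fin m → ℝ → Q)
        (ubar ubar' : ℝ → V) (ybar ybar' : Fin m → ℝ → Z)
        (pbar pbar' pbar'' : Fin m → ℝ → Q),
        -- data: f continuously differentiable, the gᵢ continuous
        (∀ t ∈ Icc (0:ℝ) T, HasDerivWithinAt f (f' t) (Icc 0 T) t) →
        ContinuousOn f (Icc 0 T) → ContinuousOn f' (Icc 0 T) →
        (∀ i, ContinuousOn (g i) (Icc 0 T)) →
        -- (u,(yᵢ),(pᵢ)) is a C¹ solution of the multiple-network system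
        (∀ t ∈ Icc (0:ℝ) T, HasDerivWithinAt u (u' t) (Icc 0 T) t) →
        ContinuousOn u' (Icc 0 T) →
        (∀ i, ∀ t ∈ Icc (0:ℝ) T, HasDerivWithinAt (y i) (y' i t) (Icc 0 T) t) →
        (∀ i, ContinuousOn (y' i) (Icc 0 T)) →
        (∀ i, ∀ t ∈ Icc (0:ℝ) T, HasDerivWithinAt (p i) (p' i t) (Icc 0 T) t) →
        (∀ i, ContinuousOn (p' i) (Icc 0 T)) →
        (∀ t ∈ Icc (0:ℝ) T, ∀ v : V, a (u t) v - ∑ i, d i v (p i t) = f t v) →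
        (∀ t ∈ Icc (0:ℝ) T, ∀ i, ∀ z : Z,
          (inner ℝ (ιZ (y i t)) (ιZ z) : ℝ) - dhat i z (p i t) = 0) →
        (∀ t ∈ Icc (0:ℝ) T, ∀ i, ∀ q : Q,
          d i (u' t) q + c (p' i t) q + dhat i (y i t) q
            - ∑ j ∈ Finset.univ.erase i, βm i j * (inner ℝ (p i t - p j t) q : ℝ)
            = g i t q) →
        -- (ū,(ȳᵢ),(p̄ᵢ)) solves the delay network system, with p̄ᵢ ∈ C²([−τ,T])
        (∀ t ∈ Icc (0:ℝ) T, HasDerivWithinAt ubar (ubar' t) (Icc 0 T) t) →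
        ContinuousOn ubar' (Icc 0 T) →
        (∀ i, ∀ t ∈ Icc (0:ℝ) T, HasDerivWithinAt (ybar i) (ybar' i t) (Icc 0 T) t) →
        (∀ i, ContinuousOn (ybar' i) (Icc 0 T)) →
        (∀ i, ∀ t ∈ Icc (-τ) T, HasDerivWithinAt (pbar i) (pbar' i t) (Icc (-τ) T) t) →
        (∀ i, ∀ t ∈ Icc (-τ) T, HasDerivWithinAt (pbar' i) (pbar'' i t) (Icc (-τ) T) t) →
        (∀ i, ContinuousOn (pbar'' i) (Icc (-τ) T)) →
        (∀ t ∈ Icc (0:ℝ) T, ∀ v : V,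
          a (ubar t) v - ∑ i, d i v (pbar i (t - τ)) = f t v) →
        (∀ t ∈ Icc (0:ℝ) T, ∀ i, ∀ z : Z,
          (inner ℝ (ιZ (ybar i t)) (ιZ z) : ℝ) - dhat i z (pbar i t) = 0) →
        (∀ t ∈ Icc (0:ℝ) T, ∀ i, ∀ q : Q,
          d i (ubar' t) q + c (pbar' i t) q + dhat i (ybar i t) q
            - ∑ j ∈ Finset.univ.erase i, βm i j * (inner ℝ (pbar i t - pbar j t) q : ℝ)
            = g i t q) →
        -- matching initial values
        ubar 0 = u 0 → (∀ i, ybar i 0 = y i 0) → (∀ i, pbar i 0 = p i 0) →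
        -- conclusion
        ∀ t ∈ Icc (0:ℝ) T,
          ‖ubar t - u t‖ ^ 2 + ∑ i, ‖pbar i t - p i t‖ ^ 2 +
              ∑ i, ∫ s in (0:ℝ)..t, ‖ιZ (ybar i s - y i s)‖ ^ 2 ≤
            C₁ * τ ^ 2 * m * (1 + Real.exp (C₂ * (1 + 4 * (m : ℝ) ^ 2 * β ^ 2) * t)) *
              (∑ i, (∫ s in (0:ℝ)..T, ‖pbar' i s‖ ^ 2) +
                (1 + τ ^ 2) * T *
                  ∑ i, (⨆ s : Icc (-τ) T, ‖pbar'' i (s : ℝ)‖) ^ 2) := by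
  classical
  -- continuous versions of the bilinear forms
  set Da : V →L[ℝ] V →L[ℝ] ℝ := LinearMap.mkContinuous₂ a C_a
    (fun x yy => by rw [Real.norm_eq_abs]; exact ha_bdd x yy) with hDa_def
  set Dd : Fin m → V →L[ℝ] Q →L[ℝ] ℝ := fun i => LinearMap.mkContinuous₂ (d i) (C_d i)
    (fun x yy => by rw [Real.norm_eq_abs]; exact hd_bdd i x yy) with hDd_def
  set Ddh : Fin m → Z →L[ℝ] Q →L[ℝ] ℝ := fun i => LinearMap.mkContinuous₂ (dhat i) (C_dhat i)
    (fun x yy => by rw [Real.norm_eq_abs]; exact hdhat_bdd i x yy) with hDdh_def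
  have hDa : ∀ x yy, Da x yy = a x yy := fun _ _ => rfl
  have hDd : ∀ i x yy, Dd i x yy = d i x yy := fun _ _ _ => rfl
  have hDdh : ∀ i x yy, Ddh i x yy = dhat i x yy := fun _ _ _ => rfl
  set Cd2 : ℝ := ∑ i, (C_d i)^2 with hCd2_def
  have hCd2 : 0 ≤ Cd2 := Finset.sum_nonneg fun i _ => sq_nonneg _
  set c₃ : ℝ := Cd2 / (2*c_a*c_c) with hc₃_def
  have hc₃ : 0 ≤ c₃ := by
    apply div_nonneg hCd2; positivity
  have hterm1 : 0 ≤ (2*Cd2/c_a^2)*(c₃+1) := by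
    apply mul_nonneg
    · apply div_nonneg (by linarith) (by positivity)
    · linarith
  have hterm2 : 0 ≤ Cd2/(2*c_a) := div_nonneg hCd2 (by positivity)
  have hterm3 : 0 ≤ c_c*c₃ := mul_nonneg hc_c.le hc₃
  refine ⟨c₃ + (2*Cd2/c_a^2)*(c₃+1) + Cd2/(2*c_a) + c_c*c₃ + 1, 3 + 2/c_c^2,
    by linarith, by positivity, ?_⟩
  intro T τ β hT hτ hβ βm hβm f f' g u u' y y' p p' ubar ubar' ybar ybar' pbar pbar' pbar''
    hfD hfc hf'c hgc huD hu'c hyD hy'c hpD hp'c hequ heqy heqp hubD hub'c hybD hyb'c hpbD hpb'D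
    hpb''c hequb heqyb heqpb hu0 hy0 hp0
  have hT' : (0:ℝ) ≤ T := hT.le
  have hτ' : (0:ℝ) ≤ τ := hτ.le
  have hsub : Icc (0:ℝ) T ⊆ Icc (-τ) T := Icc_subset_Icc (by linarith) le_rfl
  have hmem0 : (0:ℝ) ∈ Icc (0:ℝ) T := ⟨le_rfl, hT'⟩
  have hUD : UniqueDiffOn ℝ (Icc (0:ℝ) T) := uniqueDiffOn_Icc hT
  -- error functions
  set eu : ℝ → V := fun t => ubar t - u t with heu_def
  set eu' : ℝ → V := fun t => ubar' t - u' t with heu'_def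
  set ey : Fin m → ℝ → Z := fun i t => ybar i t - y i t with hey_def
  set ey' : Fin m → ℝ → Z := fun i t => ybar' i t - y' i t with hey'_def
  set ep : Fin m → ℝ → Q := fun i t => pbar i t - p i t with hep_def
  set ep' : Fin m → ℝ → Q := fun i t => pbar' i t - p' i t with hep'_def
  set dl : Fin m → ℝ → Q := fun i t => pbar i (t - τ) - pbar i t with hdl_def
  set dl' : Fin m → ℝ → Q := fun i t => pbar' i (t - τ) - pbar' i t with hdl'_def
  set S : Fin m → ℝ := fun i => ⨆ s : Icc (-τ) T, ‖pbar'' i (s:ℝ)‖ with hS_def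
  set P2 : ℝ := ∑ i, S i ^ 2 with hP2_def
  set Pb : ℝ := (∑ i, (∫ s in (0:ℝ)..T, ‖pbar' i s‖^2)) + (1+τ^2)*T*P2 with hPb_def
  have hmapsTo : ∀ t ∈ Icc (0:ℝ) T, t - τ ∈ Icc (-τ) T :=
    fun x hx => ⟨by linarith [hx.1], by linarith [hx.2]⟩
  -- sup bounds on pbar''
  have hSb : ∀ i, ∀ x ∈ Icc (-τ) T, ‖pbar'' i x‖ ≤ S i := by
    intro i x hx
    have hbdd : BddAbove (Set.range fun s : Icc (-τ) T => ‖pbar'' i (s:ℝ)‖) := by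
      have h1 : (Set.range fun s : Icc (-τ) T => ‖pbar'' i (s:ℝ)‖)
          = (fun x => ‖pbar'' i x‖) '' Icc (-τ) T := by
        ext r
        constructor
        · rintro ⟨⟨x, hx⟩, rfl⟩; exact ⟨x, hx, rfl⟩
        · rintro ⟨x, hx, rfl⟩; exact ⟨⟨x, hx⟩, rfl⟩
      rw [h1]
      exact (isCompact_Icc.image_of_continuousOn ((hpb''c i).norm)).bddAbove
    exact le_ciSup hbdd ⟨x, hx⟩
  have hSnn : ∀ i, 0 ≤ S i := by
    intro i
    have hm : -τ ∈ Icc (-τ) T := ⟨le_rfl, by linarith⟩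
    exact le_trans (norm_nonneg _) (hSb i _ hm)
  have hP2nn : 0 ≤ P2 := Finset.sum_nonneg fun i _ => sq_nonneg _
  have hPbnn : 0 ≤ Pb := by
    have h1 : 0 ≤ ∑ i, (∫ s in (0:ℝ)..T, ‖pbar' i s‖^2) :=
      Finset.sum_nonneg fun i _ =>
        intervalIntegral.integral_nonneg hT' (fun x _ => sq_nonneg _)
    have h2 : 0 ≤ (1+τ^2)*T*P2 := by positivity
    rw [hPb_def]; linarith
  have hTP2 : T * P2 ≤ Pb := by
    have h1 : 0 ≤ ∑ i, (∫ s in (0:ℝ)..T, ‖pbar' i s‖^2) :=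
      Finset.sum_nonneg fun i _ =>
        intervalIntegral.integral_nonneg hT' (fun x _ => sq_nonneg _)
    have h2 : T * P2 ≤ (1+τ^2)*T*P2 := by nlinarith [mul_nonneg hT' hP2nn, sq_nonneg τ]
    rw [hPb_def]; linarith
  -- bound on the delay difference of pbar'
  have hdl'b : ∀ i, ∀ s ∈ Icc (0:ℝ) T, ‖dl' i s‖ ≤ τ * S i := by
    intro i s hs
    have hsubI : Icc (s - τ) s ⊆ Icc (-τ) T :=
      Icc_subset_Icc (by linarith [hs.1]) hs.2
    have hD : ∀ x ∈ Icc (s - τ) s, HasDerivWithinAt (pbar' i) (pbar'' i x) (Icc (s-τ) s) x :=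
      fun x hx => (hpb'D i x (hsubI hx)).mono hsubI
    have hbd : ∀ x ∈ Ico (s - τ) s, ‖pbar'' i x‖ ≤ S i :=
      fun x hx => hSb i x (hsubI (Ico_subset_Icc_self hx))
    have := norm_image_sub_le_of_norm_deriv_le_segment' hD hbd s ⟨by linarith, le_rfl⟩
    have h2 : ‖pbar' i s - pbar' i (s - τ)‖ ≤ S i * τ := by
      simpa using this
    rw [hdl'_def]
    calc ‖pbar' i (s - τ) - pbar' i s‖ = ‖pbar' i s - pbar' i (s - τ)‖ := norm_sub_rev _ _
      _ ≤ S i * τ := h2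
      _ = τ * S i := mul_comm _ _
  -- derivatives of error functions on [0, T]
  have heuD : ∀ t ∈ Icc (0:ℝ) T, HasDerivWithinAt eu (eu' t) (Icc 0 T) t :=
    fun t ht => (hubD t ht).sub (huD t ht)
  have heyD : ∀ i, ∀ t ∈ Icc (0:ℝ) T, HasDerivWithinAt (ey i) (ey' i t) (Icc 0 T) t :=
    fun i t ht => (hybD i t ht).sub (hyD i t ht)
  have hepD : ∀ i, ∀ t ∈ Icc (0:ℝ) T, HasDerivWithinAt (ep i) (ep' i t) (Icc 0 T) t :=
    fun i t ht => ((hpbD i t (hsub ht)).mono hsub).sub (hpD i t ht)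
  have hshift : ∀ i, ∀ t ∈ Icc (0:ℝ) T,
      HasDerivWithinAt (fun s => pbar i (s - τ)) (pbar' i (t - τ)) (Icc 0 T) t := by
    intro i t ht
    have hmaps : MapsTo (fun s : ℝ => s - τ) (Icc (0:ℝ) T) (Icc (-τ) T) :=
      fun x hx => hmapsTo x hx
    have hinner : HasDerivWithinAt (fun s : ℝ => s - τ) 1 (Icc (0:ℝ) T) t := by
      simpa using (hasDerivWithinAt_id t (Icc (0:ℝ) T)).sub_const τ
    have := (hpbD i (t - τ) (hmapsTo t ht)).scomp t hinner hmaps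
    rw [one_smul] at this
    exact this
  have hdlD : ∀ i, ∀ t ∈ Icc (0:ℝ) T, HasDerivWithinAt (dl i) (dl' i t) (Icc 0 T) t :=
    fun i t ht => (hshift i t ht).sub ((hpbD i t (hsub ht)).mono hsub)
  -- continuity of error functions
  have heuc : ContinuousOn eu (Icc (0:ℝ) T) :=
    fun x hx => (heuD x hx).continuousWithinAt
  have heyc : ∀ i, ContinuousOn (ey i) (Icc (0:ℝ) T) :=
    fun i x hx => (heyD i x hx).continuousWithinAt
  have hepc : ∀ i, ContinuousOn (ep i) (Icc (0:ℝ) T) :=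
    fun i x hx => (hepD i x hx).continuousWithinAt
  have hpb'c : ∀ i, ContinuousOn (pbar' i) (Icc (-τ) T) :=
    fun i x hx => (hpb'D i x hx).continuousWithinAt
  have hep'c : ∀ i, ContinuousOn (ep' i) (Icc (0:ℝ) T) := by
    intro i
    rw [hep'_def]
    exact ((hpb'c i).mono hsub).sub (hp'c i)
  -- initial values of errors
  have heu0 : eu 0 = 0 := by rw [heu_def]; simp [hu0]
  have hey0 : ∀ i, ey i 0 = 0 := by intro i; simp only [hey_def]; simp [hy0 i]
  have hep0 : ∀ i, ep i 0 = 0 := by intro i; simp only [hep_def]; simp [hp0 i]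
  -- difference equations
  have hE1 : ∀ t ∈ Icc (0:ℝ) T, ∀ v : V,
      a (eu t) v = (∑ i, d i v (ep i t)) + ∑ i, d i v (dl i t) := by
    intro t ht v
    have h1 := hequb t ht v
    have h2 := hequ t ht v
    have h3 : a (eu t) v = a (ubar t) v - a (u t) v := by
      simp only [heu_def, map_sub, LinearMap.sub_apply]
    have h4 : ∀ i : Fin m, d i v (pbar i (t - τ)) - d i v (p i t)
        = d i v (ep i t) + d i v (dl i t) := by
      intro i
      have h5 : pbar i (t - τ) - p i t = ep i t + dl i t := by
        simp only [hep_def, hdl_def]; abel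
      rw [← map_sub (d i v), h5, map_add]
    calc a (eu t) v = a (ubar t) v - a (u t) v := h3
      _ = (∑ i, d i v (pbar i (t-τ))) - ∑ i, d i v (p i t) := by linarith
      _ = ∑ i, (d i v (pbar i (t-τ)) - d i v (p i t)) := (Finset.sum_sub_distrib _ _).symm
      _ = ∑ i, (d i v (ep i t) + d i v (dl i t)) := Finset.sum_congr rfl (fun i _ => h4 i)
      _ = (∑ i, d i v (ep i t)) + ∑ i, d i v (dl i t) := Finset.sum_add_distrib
  have hE0 : ∀ v : V, (∑ i, d i v (dl i 0)) = 0 := by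
    intro v
    have h1 := hE1 0 hmem0 v
    rw [heu0] at h1
    simp only [map_zero, LinearMap.zero_apply] at h1
    have h2 : (∑ i, d i v (ep i 0)) = 0 :=
      Finset.sum_eq_zero fun i _ => by rw [hep0 i, map_zero]
    rw [h2] at h1
    linarith
  have hE2 : ∀ t ∈ Icc (0:ℝ) T, ∀ i, ∀ z : Z,
      (inner ℝ (ιZ (ey i t)) (ιZ z) : ℝ) = dhat i z (ep i t) := by
    intro t ht i z
    have h1 := heqyb t ht i z
    have h2 := heqy t ht i z
    have h3 : (inner ℝ (ιZ (ey i t)) (ιZ z) : ℝ)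
        = (inner ℝ (ιZ (ybar i t)) (ιZ z) : ℝ) - (inner ℝ (ιZ (y i t)) (ιZ z) : ℝ) := by
      simp only [hey_def, map_sub, inner_sub_left]
    have h4 : dhat i z (ep i t) = dhat i z (pbar i t) - dhat i z (p i t) := by
      simp only [hep_def, map_sub]
    rw [h3, h4]
    linarith
  have hE3 : ∀ t ∈ Icc (0:ℝ) T, ∀ i, ∀ q : Q,
      d i (eu' t) q + c (ep' i t) q + dhat i (ey i t) q
        = ∑ j ∈ Finset.univ.erase i, βm i j * (inner ℝ (ep i t - ep j t) q : ℝ) := by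
    intro t ht i q
    have h1 := heqpb t ht i q
    have h2 := heqp t ht i q
    have h3 : d i (eu' t) q = d i (ubar' t) q - d i (u' t) q := by
      simp only [heu'_def, map_sub, LinearMap.sub_apply]
    have h4 : c (ep' i t) q = c (pbar' i t) q - c (p' i t) q := by
      simp only [hep'_def, map_sub, LinearMap.sub_apply]
    have h5 : dhat i (ey i t) q = dhat i (ybar i t) q - dhat i (y i t) q := by
      simp only [hey_def, map_sub, LinearMap.sub_apply]
    have h7 : (∑ j ∈ Finset.univ.erase i, βm i j * (inner ℝ (ep i t - ep j t) q : ℝ))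
        = (∑ j ∈ Finset.univ.erase i, βm i j * (inner ℝ (pbar i t - pbar j t) q : ℝ))
          - (∑ j ∈ Finset.univ.erase i, βm i j * (inner ℝ (p i t - p j t) q : ℝ)) := by
      rw [← Finset.sum_sub_distrib]
      refine Finset.sum_congr rfl fun j _ => ?_
      have h6 : ep i t - ep j t = (pbar i t - pbar j t) - (p i t - p j t) := by
        simp only [hep_def]; abel
      rw [h6, inner_sub_left]
      ring
    rw [h3, h4, h5, h7]
    linarith
  -- differentiated equations
  have hE1' : ∀ t ∈ Icc (0:ℝ) T, ∀ v : V,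
      a (eu' t) v = (∑ i, d i v (ep' i t)) + ∑ i, d i v (dl' i t) := by
    intro t ht v
    set F : ℝ → ℝ := fun s =>
      Da.flip v (eu s) - ((∑ i, (Dd i v) (ep i s)) + ∑ i, (Dd i v) (dl i s)) with hF_def
    have hFD : ∀ s ∈ Icc (0:ℝ) T, HasDerivWithinAt F
        (Da.flip v (eu' s) - ((∑ i, (Dd i v) (ep' i s)) + ∑ i, (Dd i v) (dl' i s)))
        (Icc 0 T) s := by
      intro s hs
      have h1 : HasDerivWithinAt (fun s => Da.flip v (eu s)) (Da.flip v (eu' s)) (Icc 0 T) s :=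
        (Da.flip v).hasFDerivAt.comp_hasDerivWithinAt s (heuD s hs)
      have h2 : HasDerivWithinAt (fun s => ∑ i, (Dd i v) (ep i s))
          (∑ i, (Dd i v) (ep' i s)) (Icc 0 T) s :=
        HasDerivWithinAt.fun_sum fun i _ =>
          (Dd i v).hasFDerivAt.comp_hasDerivWithinAt s (hepD i s hs)
      have h3 : HasDerivWithinAt (fun s => ∑ i, (Dd i v) (dl i s))
          (∑ i, (Dd i v) (dl' i s)) (Icc 0 T) s :=
        HasDerivWithinAt.fun_sum fun i _ =>
          (Dd i v).hasFDerivAt.comp_hasDerivWithinAt s (hdlD i s hs)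
      exact h1.sub (h2.add h3)
    have hF0 : ∀ s ∈ Icc (0:ℝ) T, F s = 0 := by
      intro s hs
      have h1 : F s = a (eu s) v - ((∑ i, d i v (ep i s)) + ∑ i, d i v (dl i s)) := rfl
      rw [h1, hE1 s hs v]
      ring
    have hzero : HasDerivWithinAt F 0 (Icc 0 T) t :=
      (hasDerivWithinAt_const t (Icc (0:ℝ) T) (0:ℝ)).congr hF0 (hF0 t ht)
    have h1 := (hFD t ht).derivWithin (hUD t ht)
    have h2 := hzero.derivWithin (hUD t ht)
    have h3 : Da.flip v (eu' t) - ((∑ i, (Dd i v) (ep' i t)) + ∑ i, (Dd i v) (dl' i t))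
        = (0:ℝ) := by rw [← h1, h2]
    have h4 : a (eu' t) v - ((∑ i, d i v (ep' i t)) + ∑ i, d i v (dl' i t)) = (0:ℝ) := h3
    linarith
  have hE2' : ∀ t ∈ Icc (0:ℝ) T, ∀ i, ∀ z : Z,
      (inner ℝ (ιZ (ey' i t)) (ιZ z) : ℝ) = dhat i z (ep' i t) := by
    intro t ht i z
    set F : ℝ → ℝ := fun s =>
      (inner ℝ (ιZ (ey i s)) (ιZ z) : ℝ) - (Ddh i z) (ep i s) with hF_def
    have hFD : ∀ s ∈ Icc (0:ℝ) T, HasDerivWithinAt F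
        ((inner ℝ (ιZ (ey' i s)) (ιZ z) : ℝ) - (Ddh i z) (ep' i s)) (Icc 0 T) s := by
      intro s hs
      have h1 : HasDerivWithinAt (fun s => ιZ (ey i s)) (ιZ (ey' i s)) (Icc 0 T) s :=
        ιZ.hasFDerivAt.comp_hasDerivWithinAt s (heyD i s hs)
      have h2 : HasDerivWithinAt (fun s => (inner ℝ (ιZ (ey i s)) (ιZ z) : ℝ))
          ((inner ℝ (ιZ (ey' i s)) (ιZ z) : ℝ)) (Icc 0 T) s := by
        have h3 := HasDerivWithinAt.inner ℝ h1
          (hasDerivWithinAt_const s (Icc (0:ℝ) T) (ιZ z))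
        simpa using h3
      have h4 : HasDerivWithinAt (fun s => (Ddh i z) (ep i s))
          ((Ddh i z) (ep' i s)) (Icc 0 T) s :=
        (Ddh i z).hasFDerivAt.comp_hasDerivWithinAt s (hepD i s hs)
      exact h2.sub h4
    have hF0 : ∀ s ∈ Icc (0:ℝ) T, F s = 0 := by
      intro s hs
      have h1 : F s = (inner ℝ (ιZ (ey i s)) (ιZ z) : ℝ) - dhat i z (ep i s) := rfl
      rw [h1, hE2 s hs i z]
      ring
    have hzero : HasDerivWithinAt F 0 (Icc 0 T) t :=
      (hasDerivWithinAt_const t (Icc (0:ℝ) T) (0:ℝ)).congr hF0 (hF0 t ht)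
    have h1 := (hFD t ht).derivWithin (hUD t ht)
    have h2 := hzero.derivWithin (hUD t ht)
    have h3 : (inner ℝ (ιZ (ey' i t)) (ιZ z) : ℝ) - (Ddh i z) (ep' i t) = (0:ℝ) := by
      rw [← h1, h2]
    have h4 : (inner ℝ (ιZ (ey' i t)) (ιZ z) : ℝ) - dhat i z (ep' i t) = (0:ℝ) := h3
    linarith
  -- energy quantities
  set phi : ℝ → ℝ := fun t => ∑ i, ‖ep i t‖^2 with hphi_def
  set Yf : ℝ → ℝ := fun t => ∑ i, ‖ιZ (ey i t)‖^2 with hYf_def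
  set h2f : ℝ → ℝ := fun t => ∑ i, ‖ep' i t‖^2 with hh2f_def
  set K1s : ℝ := (∑ i, |C_d i| * S i)^2/(4*c_a) with hK1s_def
  set K2 : ℝ := 2*(m:ℝ)^2*β^2/c_c with hK2_def
  have hK1snn : 0 ≤ K1s := by rw [hK1s_def]; positivity
  have hK2nn : 0 ≤ K2 := by rw [hK2_def]; positivity
  have hphinn : ∀ t, 0 ≤ phi t := fun t => Finset.sum_nonneg fun i _ => sq_nonneg _
  have hYfnn : ∀ t, 0 ≤ Yf t := fun t => Finset.sum_nonneg fun i _ => sq_nonneg _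
  have hh2fnn : ∀ t, 0 ≤ h2f t := fun t => Finset.sum_nonneg fun i _ => sq_nonneg _
  have hphi0 : phi 0 = 0 := by
    rw [hphi_def]
    exact Finset.sum_eq_zero fun i _ => by rw [hep0 i]; simp
  have hYf0 : Yf 0 = 0 := by
    rw [hYf_def]
    exact Finset.sum_eq_zero fun i _ => by rw [hey0 i]; simp
  have hphiD : ∀ t ∈ Icc (0:ℝ) T, HasDerivWithinAt phi
      (∑ i, ((inner ℝ (ep i t) (ep' i t) : ℝ) + (inner ℝ (ep' i t) (ep i t) : ℝ)))
      (Icc 0 T) t := by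
    intro t ht
    have h1 : HasDerivWithinAt (fun s => ∑ i, (inner ℝ (ep i s) (ep i s) : ℝ))
        (∑ i, ((inner ℝ (ep i t) (ep' i t) : ℝ) + (inner ℝ (ep' i t) (ep i t) : ℝ)))
        (Icc 0 T) t :=
      HasDerivWithinAt.fun_sum fun i _ =>
        HasDerivWithinAt.inner ℝ (hepD i t ht) (hepD i t ht)
    have h2 : phi = fun s => ∑ i, (inner ℝ (ep i s) (ep i s) : ℝ) := by
      funext s
      simp only [hphi_def, real_inner_self_eq_norm_sq]
    rw [h2]
    exact h1
  have hYfD : ∀ t ∈ Icc (0:ℝ) T, HasDerivWithinAt Yf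
      (∑ i, ((inner ℝ (ιZ (ey i t)) (ιZ (ey' i t)) : ℝ) + (inner ℝ (ιZ (ey' i t)) (ιZ (ey i t)) : ℝ)))
      (Icc 0 T) t := by
    intro t ht
    have h1 : HasDerivWithinAt (fun s => ∑ i, (inner ℝ (ιZ (ey i s)) (ιZ (ey i s)) : ℝ))
        (∑ i, ((inner ℝ (ιZ (ey i t)) (ιZ (ey' i t)) : ℝ) + (inner ℝ (ιZ (ey' i t)) (ιZ (ey i t)) : ℝ)))
        (Icc 0 T) t := by
      refine HasDerivWithinAt.fun_sum fun i _ => ?_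
      have hc1 : HasDerivWithinAt (fun s => ιZ (ey i s)) (ιZ (ey' i t)) (Icc 0 T) t :=
        ιZ.hasFDerivAt.comp_hasDerivWithinAt t (heyD i t ht)
      exact HasDerivWithinAt.inner ℝ hc1 hc1
    have h2 : Yf = fun s => ∑ i, (inner ℝ (ιZ (ey i s)) (ιZ (ey i s)) : ℝ) := by
      funext s
      simp only [hYf_def, real_inner_self_eq_norm_sq]
    rw [h2]
    exact h1
  have hphic : ContinuousOn phi (Icc (0:ℝ) T) :=
    fun x hx => (hphiD x hx).continuousWithinAt
  have hYfc : ContinuousOn Yf (Icc (0:ℝ) T) :=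
    fun x hx => (hYfD x hx).continuousWithinAt
  have hh2fc : ContinuousOn h2f (Icc (0:ℝ) T) := by
    rw [hh2f_def]
    apply continuousOn_finset_sum
    intro i _
    exact ((hep'c i).norm).pow 2
  -- pointwise energy inequality
  have hP1 : ∀ t ∈ Icc (0:ℝ) T,
      c_c/2 * h2f t + (∑ i, (inner ℝ (ιZ (ey' i t)) (ιZ (ey i t)) : ℝ))
        ≤ τ^2 * K1s + K2 * phi t := by
    intro t ht
    have e1 := hE1' t ht (eu' t)
    have e2s : (∑ i, d i (eu' t) (ep' i t)) + (∑ i, c (ep' i t) (ep' i t))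
        + (∑ i, (inner ℝ (ιZ (ey' i t)) (ιZ (ey i t)) : ℝ))
        = ∑ i, ∑ j ∈ Finset.univ.erase i, βm i j * (inner ℝ (ep i t - ep j t) (ep' i t) : ℝ) := by
      rw [← Finset.sum_add_distrib, ← Finset.sum_add_distrib]
      refine Finset.sum_congr rfl fun i _ => ?_
      rw [hE2' t ht i (ey i t)]
      exact hE3 t ht i (ep' i t)
    -- bound on the delay source term
    have hs1 : (∑ i, d i (eu' t) (dl' i t)) ≤ ‖eu' t‖ * (τ * ∑ i, |C_d i| * S i) := by
      have hper : ∀ i : Fin m, d i (eu' t) (dl' i t) ≤ |C_d i| * ‖eu' t‖ * (τ * S i) := by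
        intro i
        have b1 := le_abs_self (d i (eu' t) (dl' i t))
        have b2 := hd_bdd i (eu' t) (dl' i t)
        have b3 := hdl'b i t ht
        have b4 : C_d i * ‖eu' t‖ * ‖dl' i t‖ ≤ |C_d i| * ‖eu' t‖ * ‖dl' i t‖ := by
          have := mul_le_mul_of_nonneg_right
            (mul_le_mul_of_nonneg_right (le_abs_self (C_d i)) (norm_nonneg (eu' t)))
            (norm_nonneg (dl' i t))
          linarith
        have b5 : |C_d i| * ‖eu' t‖ * ‖dl' i t‖ ≤ |C_d i| * ‖eu' t‖ * (τ * S i) :=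
          mul_le_mul_of_nonneg_left b3
            (mul_nonneg (abs_nonneg _) (norm_nonneg _))
        linarith
      calc (∑ i, d i (eu' t) (dl' i t)) ≤ ∑ i, |C_d i| * ‖eu' t‖ * (τ * S i) :=
            Finset.sum_le_sum fun i _ => hper i
        _ = ‖eu' t‖ * (τ * ∑ i, |C_d i| * S i) := by
            rw [Finset.mul_sum, Finset.mul_sum]
            refine Finset.sum_congr rfl fun i _ => by ring
    have hs2 : ‖eu' t‖ * (τ * ∑ i, |C_d i| * S i) ≤ c_a*‖eu' t‖^2 + τ^2 * K1s := by
      have := aux_young' (x := τ * ∑ i, |C_d i| * S i) (y := ‖eu' t‖) hc_a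
      have heq : (τ * ∑ i, |C_d i| * S i)^2/(4*c_a) = τ^2 * K1s := by
        rw [hK1s_def, mul_pow, mul_div_assoc]
      rw [heq] at this
      calc ‖eu' t‖ * (τ * ∑ i, |C_d i| * S i)
          = (τ * ∑ i, |C_d i| * S i) * ‖eu' t‖ := mul_comm _ _
        _ ≤ c_a*‖eu' t‖^2 + τ^2 * K1s := this
    -- bound on the exchange term
    have hB : (∑ i, ∑ j ∈ Finset.univ.erase i, βm i j * (inner ℝ (ep i t - ep j t) (ep' i t) : ℝ))
        ≤ c_c/2 * h2f t + K2 * phi t := by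
      have hcs : (∑ j, ‖ep j t‖)^2 ≤ (m:ℝ) * phi t := by
        have h1 := sq_sum_le_card_mul_sum_sq (s := (Finset.univ : Finset (Fin m)))
          (f := fun j => ‖ep j t‖)
        simpa [hphi_def, Finset.card_univ] using h1
      have hper : ∀ i : Fin m,
          (∑ j ∈ Finset.univ.erase i, βm i j * (inner ℝ (ep i t - ep j t) (ep' i t) : ℝ))
          ≤ c_c/2 * ‖ep' i t‖^2 + (β^2*(m:ℝ)^2/c_c) * ‖ep i t‖^2
            + (β^2*(m:ℝ)/c_c) * phi t := by
        intro i
        have hb1 : (∑ j ∈ Finset.univ.erase i, βm i j * (inner ℝ (ep i t - ep j t) (ep' i t) : ℝ))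
            ≤ ∑ j ∈ Finset.univ.erase i, β * ((‖ep i t‖ + ‖ep j t‖) * ‖ep' i t‖) := by
          refine Finset.sum_le_sum fun j hj => ?_
          have hji : j ≠ i := Finset.ne_of_mem_erase hj
          have hβij := hβm i j (Ne.symm hji)
          have habs : |(inner ℝ (ep i t - ep j t) (ep' i t) : ℝ)|
              ≤ ‖ep i t - ep j t‖ * ‖ep' i t‖ := abs_real_inner_le_norm _ _
          have hn : ‖ep i t - ep j t‖ ≤ ‖ep i t‖ + ‖ep j t‖ := norm_sub_le _ _
          calc βm i j * (inner ℝ (ep i t - ep j t) (ep' i t) : ℝ)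
              ≤ |βm i j * (inner ℝ (ep i t - ep j t) (ep' i t) : ℝ)| := le_abs_self _
            _ = |βm i j| * |(inner ℝ (ep i t - ep j t) (ep' i t) : ℝ)| := abs_mul _ _
            _ ≤ β * (‖ep i t - ep j t‖ * ‖ep' i t‖) :=
                mul_le_mul hβij habs (abs_nonneg _) hβ
            _ ≤ β * ((‖ep i t‖ + ‖ep j t‖) * ‖ep' i t‖) := by
                refine mul_le_mul_of_nonneg_left ?_ hβ
                exact mul_le_mul_of_nonneg_right hn (norm_nonneg _)
        have hc1 : (∑ j ∈ Finset.univ.erase i, (‖ep i t‖ + ‖ep j t‖))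
            ≤ (m:ℝ) * ‖ep i t‖ + ∑ j, ‖ep j t‖ := by
          rw [Finset.sum_add_distrib, Finset.sum_const,
            Finset.card_erase_of_mem (Finset.mem_univ i)]
          have hcard : (((Finset.univ : Finset (Fin m)).card - 1 : ℕ) : ℝ) ≤ (m:ℝ) := by
            rw [Finset.card_univ, Fintype.card_fin]
            exact_mod_cast Nat.sub_le m 1
          have hsubsum : (∑ j ∈ Finset.univ.erase i, ‖ep j t‖) ≤ ∑ j, ‖ep j t‖ :=
            Finset.sum_le_sum_of_subset_of_nonneg (Finset.erase_subset _ _)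
              (fun j _ _ => norm_nonneg _)
          have h1 : (((Finset.univ : Finset (Fin m)).card - 1 : ℕ) : ℝ) * ‖ep i t‖
              ≤ (m:ℝ) * ‖ep i t‖ := mul_le_mul_of_nonneg_right hcard (norm_nonneg _)
          rw [nsmul_eq_mul]
          linarith
        have hb2 : (∑ j ∈ Finset.univ.erase i, β * ((‖ep i t‖ + ‖ep j t‖) * ‖ep' i t‖))
            ≤ β * (((m:ℝ) * ‖ep i t‖ + ∑ j, ‖ep j t‖) * ‖ep' i t‖) := by
          have heq1 : (∑ j ∈ Finset.univ.erase i, β * ((‖ep i t‖ + ‖ep j t‖) * ‖ep' i t‖))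
              = (β * ‖ep' i t‖) * ∑ j ∈ Finset.univ.erase i, (‖ep i t‖ + ‖ep j t‖) := by
            rw [Finset.mul_sum]
            refine Finset.sum_congr rfl fun j _ => by ring
          rw [heq1]
          have h2 := mul_le_mul_of_nonneg_left hc1
            (mul_nonneg hβ (norm_nonneg (ep' i t)))
          calc (β * ‖ep' i t‖) * ∑ j ∈ Finset.univ.erase i, (‖ep i t‖ + ‖ep j t‖)
              ≤ (β * ‖ep' i t‖) * ((m:ℝ) * ‖ep i t‖ + ∑ j, ‖ep j t‖) := h2
            _ = β * (((m:ℝ) * ‖ep i t‖ + ∑ j, ‖ep j t‖) * ‖ep' i t‖) := by ring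
        have hb3 : β * (((m:ℝ) * ‖ep i t‖ + ∑ j, ‖ep j t‖) * ‖ep' i t‖)
            ≤ c_c/2 * ‖ep' i t‖^2
              + (β * ((m:ℝ) * ‖ep i t‖ + ∑ j, ‖ep j t‖))^2/(2*c_c) := by
          have := aux_young (x := β * ((m:ℝ) * ‖ep i t‖ + ∑ j, ‖ep j t‖))
            (y := ‖ep' i t‖) hc_c
          calc β * (((m:ℝ) * ‖ep i t‖ + ∑ j, ‖ep j t‖) * ‖ep' i t‖)
              = (β * ((m:ℝ) * ‖ep i t‖ + ∑ j, ‖ep j t‖)) * ‖ep' i t‖ := by ring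
            _ ≤ _ := this
        have hb4 : (β * ((m:ℝ) * ‖ep i t‖ + ∑ j, ‖ep j t‖))^2
            ≤ 2*β^2*(m:ℝ)^2*‖ep i t‖^2 + 2*β^2*((m:ℝ) * phi t) := by
          have k1 : 0 ≤ β^2 * ((m:ℝ)*‖ep i t‖ - ∑ j, ‖ep j t‖)^2 := by positivity
          have k2 : 2*β^2*(∑ j, ‖ep j t‖)^2 ≤ 2*β^2*((m:ℝ) * phi t) :=
            mul_le_mul_of_nonneg_left hcs (by positivity)
          linarith [k1, k2, sq_nonneg (β*((m:ℝ)*‖ep i t‖ + ∑ j, ‖ep j t‖))]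
        have hb5 : (β * ((m:ℝ) * ‖ep i t‖ + ∑ j, ‖ep j t‖))^2/(2*c_c)
            ≤ (β^2*(m:ℝ)^2/c_c) * ‖ep i t‖^2 + (β^2*(m:ℝ)/c_c) * phi t := by
          have h1 : (β * ((m:ℝ) * ‖ep i t‖ + ∑ j, ‖ep j t‖))^2/(2*c_c)
              ≤ (2*β^2*(m:ℝ)^2*‖ep i t‖^2 + 2*β^2*((m:ℝ) * phi t))/(2*c_c) := by
            gcongr
          have h2 : (2*β^2*(m:ℝ)^2*‖ep i t‖^2 + 2*β^2*((m:ℝ) * phi t))/(2*c_c)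
              = (β^2*(m:ℝ)^2/c_c) * ‖ep i t‖^2 + (β^2*(m:ℝ)/c_c) * phi t := by
            field_simp
          linarith
        linarith [hb1, hb2, hb3, hb4, hb5]
      calc (∑ i, ∑ j ∈ Finset.univ.erase i, βm i j * (inner ℝ (ep i t - ep j t) (ep' i t) : ℝ))
          ≤ ∑ i, (c_c/2 * ‖ep' i t‖^2 + (β^2*(m:ℝ)^2/c_c) * ‖ep i t‖^2
              + (β^2*(m:ℝ)/c_c) * phi t) := Finset.sum_le_sum fun i _ => hper i
        _ = c_c/2 * h2f t + (β^2*(m:ℝ)^2/c_c) * phi t + (m:ℝ) * ((β^2*(m:ℝ)/c_c) * phi t) := by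
            rw [Finset.sum_add_distrib, Finset.sum_add_distrib, Finset.sum_const,
              Finset.card_univ, Fintype.card_fin, ← Finset.mul_sum, ← Finset.mul_sum,
              nsmul_eq_mul]
        _ ≤ c_c/2 * h2f t + K2 * phi t := by
            have heq : (β^2*(m:ℝ)^2/c_c) * phi t + (m:ℝ) * ((β^2*(m:ℝ)/c_c) * phi t)
                = K2 * phi t := by
              rw [hK2_def]
              field_simp
              ring
            linarith
    -- coercivity
    have hcoera := ha_coer (eu' t)
    have hcoerc : (∑ i, c_c * ‖ep' i t‖^2) ≤ ∑ i, c (ep' i t) (ep' i t) :=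
      Finset.sum_le_sum fun i _ => hc_coer _
    have hccsum : (∑ i, c_c * ‖ep' i t‖^2) = c_c * h2f t := by
      rw [hh2f_def, Finset.mul_sum]
    linarith [e1, e2s, hs1, hs2, hB, hcoera, hcoerc, hccsum]
  -- integrated energy inequality
  have hGY : ∀ t ∈ Icc (0:ℝ) T,
      c_c/2 * (∫ s in (0:ℝ)..t, h2f s) + (1/2) * Yf t
        ≤ τ^2*K1s*t + K2 * ∫ s in (0:ℝ)..t, phi s := by
    have hM : ∀ t ∈ Icc (0:ℝ) T, HasDerivWithinAt
        (fun t => τ^2*K1s*t + K2 * (∫ s in (0:ℝ)..t, phi s)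
          - c_c/2 * (∫ s in (0:ℝ)..t, h2f s) - (1/2) * Yf t)
        (τ^2*K1s + K2 * phi t - c_c/2 * h2f t
          - (1/2) * (∑ i, ((inner ℝ (ιZ (ey i t)) (ιZ (ey' i t)) : ℝ)
              + (inner ℝ (ιZ (ey' i t)) (ιZ (ey i t)) : ℝ)))) (Icc 0 T) t := by
      intro t ht
      have h1 : HasDerivWithinAt (fun t : ℝ => τ^2*K1s*t) (τ^2*K1s) (Icc 0 T) t := by
        simpa using (hasDerivWithinAt_id t (Icc (0:ℝ) T)).const_mul (τ^2*K1s)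
      exact ((h1.add ((aux_ftc1 hphic t ht).const_mul K2)).sub
        ((aux_ftc1 hh2fc t ht).const_mul (c_c/2))).sub ((hYfD t ht).const_mul (1/2))
    have hM' : ∀ t ∈ Icc (0:ℝ) T,
        0 ≤ τ^2*K1s + K2 * phi t - c_c/2 * h2f t
          - (1/2) * (∑ i, ((inner ℝ (ιZ (ey i t)) (ιZ (ey' i t)) : ℝ)
              + (inner ℝ (ιZ (ey' i t)) (ιZ (ey i t)) : ℝ))) := by
      intro t ht
      have h1 := hP1 t ht
      have h2 : (∑ i, ((inner ℝ (ιZ (ey i t)) (ιZ (ey' i t)) : ℝ)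
          + (inner ℝ (ιZ (ey' i t)) (ιZ (ey i t)) : ℝ)))
          = 2 * (∑ i, (inner ℝ (ιZ (ey' i t)) (ιZ (ey i t)) : ℝ)) := by
        rw [Finset.mul_sum]
        refine Finset.sum_congr rfl fun i _ => ?_
        rw [real_inner_comm (ιZ (ey i t)) (ιZ (ey' i t))]
        ring
      rw [h2]
      linarith
    intro t ht
    have hmon := aux_mono_of_deriv_nonneg hM hM' t ht
    simp only [intervalIntegral.integral_same, mul_zero, sub_zero, hYf0] at hmon
    linarith
  -- phi is controlled by its own integral
  have hphiInt : ∀ t ∈ Icc (0:ℝ) T,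
      phi t ≤ (∫ s in (0:ℝ)..t, phi s) + (∫ s in (0:ℝ)..t, h2f s) := by
    have hN : ∀ t ∈ Icc (0:ℝ) T, HasDerivWithinAt
        (fun t => (∫ s in (0:ℝ)..t, phi s) + (∫ s in (0:ℝ)..t, h2f s) - phi t)
        (phi t + h2f t
          - (∑ i, ((inner ℝ (ep i t) (ep' i t) : ℝ) + (inner ℝ (ep' i t) (ep i t) : ℝ))))
        (Icc 0 T) t := fun t ht =>
      ((aux_ftc1 hphic t ht).add (aux_ftc1 hh2fc t ht)).sub (hphiD t ht)
    have hN' : ∀ t ∈ Icc (0:ℝ) T,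
        0 ≤ phi t + h2f t
          - (∑ i, ((inner ℝ (ep i t) (ep' i t) : ℝ) + (inner ℝ (ep' i t) (ep i t) : ℝ))) := by
      intro t ht
      have h2 : phi t + h2f t = ∑ i, (‖ep i t‖^2 + ‖ep' i t‖^2) := by
        rw [hphi_def, hh2f_def, Finset.sum_add_distrib]
      have h3 : (∑ i, ((inner ℝ (ep i t) (ep' i t) : ℝ) + (inner ℝ (ep' i t) (ep i t) : ℝ)))
          ≤ ∑ i, (‖ep i t‖^2 + ‖ep' i t‖^2) := by
        refine Finset.sum_le_sum fun i _ => ?_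
        have h4 := real_inner_le_norm (ep i t) (ep' i t)
        have h5 := real_inner_le_norm (ep' i t) (ep i t)
        have h6 := sq_nonneg (‖ep i t‖ - ‖ep' i t‖)
        linarith [h4, h5, h6]
      rw [h2]
      linarith [h3]
    intro t ht
    have hmon := aux_mono_of_deriv_nonneg hN hN' t ht
    simp only [intervalIntegral.integral_same, hphi0] at hmon
    linarith
  -- Gronwall setup
  set lam : ℝ := 1 + 4*(m:ℝ)^2*β^2/c_c^2 with hlam_def
  set Agr : ℝ := 2*τ^2*K1s/c_c*T with hAgr_def
  have hb2cnn : (0:ℝ) ≤ 4*(m:ℝ)^2*β^2/c_c^2 := by positivity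
  have hlam1 : 1 ≤ lam := by rw [hlam_def]; linarith
  have hAgrnn : 0 ≤ Agr := by
    rw [hAgr_def]
    exact mul_nonneg (div_nonneg
      (mul_nonneg (by positivity) hK1snn) hc_c.le) hT'
  have hgr1 : ∀ t ∈ Icc (0:ℝ) T, phi t ≤ Agr + lam * ∫ s in (0:ℝ)..t, phi s := by
    intro t ht
    have h1 := hphiInt t ht
    have h2 := hGY t ht
    have h3 : 0 ≤ Yf t := hYfnn t
    have h5 : c_c/2 * (∫ s in (0:ℝ)..t, h2f s) ≤ τ^2*K1s*t + K2 * ∫ s in (0:ℝ)..t, phi s := by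
      linarith
    have h6 : (∫ s in (0:ℝ)..t, h2f s)
        ≤ (2/c_c)*(τ^2*K1s*t) + ((2/c_c)*K2) * ∫ s in (0:ℝ)..t, phi s := by
      have he1 : (∫ s in (0:ℝ)..t, h2f s) = (2/c_c)*(c_c/2 * (∫ s in (0:ℝ)..t, h2f s)) := by
        field_simp
      rw [he1]
      have := mul_le_mul_of_nonneg_left h5 (by positivity : (0:ℝ) ≤ 2/c_c)
      calc (2/c_c)*(c_c/2 * (∫ s in (0:ℝ)..t, h2f s))
          ≤ (2/c_c)*(τ^2*K1s*t + K2 * ∫ s in (0:ℝ)..t, phi s) := this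
        _ = (2/c_c)*(τ^2*K1s*t) + ((2/c_c)*K2) * ∫ s in (0:ℝ)..t, phi s := by ring
    have heqK : ((2/c_c)*K2) * (∫ s in (0:ℝ)..t, phi s) = (lam-1) * ∫ s in (0:ℝ)..t, phi s := by
      have : (2/c_c)*K2 = lam - 1 := by
        rw [hK2_def, hlam_def]
        field_simp
        ring
      rw [this]
    have hAt : (2/c_c)*(τ^2*K1s*t) ≤ Agr := by
      have h7 : (2/c_c)*(τ^2*K1s*t) = (2*τ^2*K1s/c_c)*t := by ring
      have h8 : (2*τ^2*K1s/c_c)*t ≤ (2*τ^2*K1s/c_c)*T :=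
        mul_le_mul_of_nonneg_left ht.2
          (div_nonneg (mul_nonneg (by positivity) hK1snn) hc_c.le)
      rw [hAgr_def, h7]
      exact h8
    rw [heqK] at h6
    calc phi t ≤ (∫ s in (0:ℝ)..t, phi s) + (∫ s in (0:ℝ)..t, h2f s) := h1
      _ ≤ (∫ s in (0:ℝ)..t, phi s)
          + ((2/c_c)*(τ^2*K1s*t) + (lam-1) * ∫ s in (0:ℝ)..t, phi s) := by linarith [h6]
      _ = (2/c_c)*(τ^2*K1s*t) + lam * ∫ s in (0:ℝ)..t, phi s := by ring
      _ ≤ Agr + lam * ∫ s in (0:ℝ)..t, phi s := by linarith [hAt]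
  have hgrb := aux_gronwall hlam1 hphic hgr1
  have hIphi : ∀ t ∈ Icc (0:ℝ) T,
      (∫ s in (0:ℝ)..t, phi s) ≤ t * (Agr * Real.exp (lam*t)) := by
    intro t ht
    have hmono : ∀ s ∈ Icc (0:ℝ) t, phi s ≤ Agr * Real.exp (lam*t) := by
      intro s hs
      have hsIcc : s ∈ Icc (0:ℝ) T := ⟨hs.1, hs.2.trans ht.2⟩
      have h1 := hgrb s hsIcc
      have h2 : Real.exp (lam*s) ≤ Real.exp (lam*t) :=
        Real.exp_le_exp.mpr (mul_le_mul_of_nonneg_left hs.2 (by linarith))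
      have h3 : Agr * Real.exp (lam*s) ≤ Agr * Real.exp (lam*t) :=
        mul_le_mul_of_nonneg_left h2 hAgrnn
      linarith
    have hint : IntervalIntegrable phi MeasureTheory.volume 0 t := by
      apply ContinuousOn.intervalIntegrable
      apply hphic.mono
      rw [uIcc_of_le ht.1]
      exact Icc_subset_Icc le_rfl ht.2
    have hconst : IntervalIntegrable (fun _ : ℝ => Agr * Real.exp (lam*t))
        MeasureTheory.volume 0 t := intervalIntegrable_const
    have hres := intervalIntegral.integral_mono_on ht.1 hint hconst hmono
    rw [intervalIntegral.integral_const] at hres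
    simp only [sub_zero, smul_eq_mul] at hres
    linarith [hres]
  -- pointwise and integrated bounds for Yf
  have hYb : ∀ t ∈ Icc (0:ℝ) T,
      Yf t ≤ 2*(τ^2*K1s*t) + 2*(K2 * (t * (Agr * Real.exp (lam*t)))) := by
    intro t ht
    have h1 := hGY t ht
    have h2 := hIphi t ht
    have h3 : 0 ≤ ∫ s in (0:ℝ)..t, h2f s :=
      intervalIntegral.integral_nonneg ht.1 (fun s _ => hh2fnn s)
    have h4 : K2 * (∫ s in (0:ℝ)..t, phi s) ≤ K2 * (t * (Agr * Real.exp (lam*t))) :=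
      mul_le_mul_of_nonneg_left h2 hK2nn
    have h5 : 0 ≤ c_c/2 * ∫ s in (0:ℝ)..t, h2f s := mul_nonneg (by positivity) h3
    linarith
  have hIY : ∀ t ∈ Icc (0:ℝ) T, (∫ s in (0:ℝ)..t, Yf s)
      ≤ t * (2*(τ^2*K1s*t) + 2*(K2 * (t * (Agr * Real.exp (lam*t))))) := by
    intro t ht
    have hmono : ∀ s ∈ Icc (0:ℝ) t,
        Yf s ≤ 2*(τ^2*K1s*t) + 2*(K2 * (t * (Agr * Real.exp (lam*t)))) := by
      intro s hs
      have hsI : s ∈ Icc (0:ℝ) T := ⟨hs.1, hs.2.trans ht.2⟩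
      have h1 := hYb s hsI
      have hst : s ≤ t := hs.2
      have he : Real.exp (lam*s) ≤ Real.exp (lam*t) :=
        Real.exp_le_exp.mpr (mul_le_mul_of_nonneg_left hst (by linarith))
      have c1 : τ^2*K1s*s ≤ τ^2*K1s*t :=
        mul_le_mul_of_nonneg_left hst (mul_nonneg (sq_nonneg τ) hK1snn)
      have c2 : K2 * (s * (Agr * Real.exp (lam*s))) ≤ K2 * (t * (Agr * Real.exp (lam*t))) := by
        refine mul_le_mul_of_nonneg_left ?_ hK2nn
        refine mul_le_mul hst (mul_le_mul_of_nonneg_left he hAgrnn) ?_ (ht.1)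
        exact mul_nonneg hAgrnn (Real.exp_pos _).le
      linarith
    have hint : IntervalIntegrable Yf MeasureTheory.volume 0 t := by
      apply ContinuousOn.intervalIntegrable
      apply hYfc.mono
      rw [uIcc_of_le ht.1]
      exact Icc_subset_Icc le_rfl ht.2
    have hconst : IntervalIntegrable
        (fun _ : ℝ => 2*(τ^2*K1s*t) + 2*(K2 * (t * (Agr * Real.exp (lam*t)))))
        MeasureTheory.volume 0 t := intervalIntegrable_const
    have hres := intervalIntegral.integral_mono_on ht.1 hint hconst hmono
    rw [intervalIntegral.integral_const] at hres
    simp only [sub_zero, smul_eq_mul] at hres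
    linarith [hres]
  -- bound on the displacement error
  have hDelta : ∀ i, ∀ t ∈ Icc (0:ℝ) T, ‖dl i t - dl i 0‖ ≤ τ * S i * t := by
    intro i t ht
    have h1 := norm_image_sub_le_of_norm_deriv_le_segment'
      (fun x hx => hdlD i x hx)
      (fun x hx => hdl'b i x (Ico_subset_Icc_self hx)) t ht
    simpa using h1
  have heub : ∀ t ∈ Icc (0:ℝ) T,
      ‖eu t‖^2 ≤ 2*Cd2/c_a^2 * (phi t + τ^2*t^2*P2) := by
    intro t ht
    have h1 := hE1 t ht (eu t)
    have h0 := hE0 (eu t)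
    have h2 : a (eu t) (eu t)
        = (∑ i, d i (eu t) (ep i t)) + ∑ i, d i (eu t) (dl i t - dl i 0) := by
      rw [h1]
      have h3 : (∑ i, d i (eu t) (dl i t - dl i 0))
          = (∑ i, d i (eu t) (dl i t)) - ∑ i, d i (eu t) (dl i 0) := by
        rw [← Finset.sum_sub_distrib]
        exact Finset.sum_congr rfl fun i _ => by rw [map_sub]
      rw [h3, h0]
      ring
    have hb1 : (∑ i, d i (eu t) (ep i t)) ≤ ‖eu t‖ * ∑ i, |C_d i| * ‖ep i t‖ := by
      have hper : ∀ i : Fin m, d i (eu t) (ep i t) ≤ |C_d i| * ‖eu t‖ * ‖ep i t‖ := by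
        intro i
        have b1 := le_abs_self (d i (eu t) (ep i t))
        have b2 := hd_bdd i (eu t) (ep i t)
        have b4 : C_d i * ‖eu t‖ * ‖ep i t‖ ≤ |C_d i| * ‖eu t‖ * ‖ep i t‖ := by
          have := mul_le_mul_of_nonneg_right
            (mul_le_mul_of_nonneg_right (le_abs_self (C_d i)) (norm_nonneg (eu t)))
            (norm_nonneg (ep i t))
          linarith
        linarith
      calc (∑ i, d i (eu t) (ep i t)) ≤ ∑ i, |C_d i| * ‖eu t‖ * ‖ep i t‖ :=
            Finset.sum_le_sum fun i _ => hper i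
        _ = ‖eu t‖ * ∑ i, |C_d i| * ‖ep i t‖ := by
            rw [Finset.mul_sum]
            exact Finset.sum_congr rfl fun i _ => by ring
    have hb2 : (∑ i, d i (eu t) (dl i t - dl i 0))
        ≤ ‖eu t‖ * ∑ i, |C_d i| * (τ * S i * t) := by
      have hper : ∀ i : Fin m,
          d i (eu t) (dl i t - dl i 0) ≤ |C_d i| * ‖eu t‖ * (τ * S i * t) := by
        intro i
        have b1 := le_abs_self (d i (eu t) (dl i t - dl i 0))
        have b2 := hd_bdd i (eu t) (dl i t - dl i 0)
        have b3 := hDelta i t ht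
        have b4 : C_d i * ‖eu t‖ * ‖dl i t - dl i 0‖
            ≤ |C_d i| * ‖eu t‖ * ‖dl i t - dl i 0‖ := by
          have := mul_le_mul_of_nonneg_right
            (mul_le_mul_of_nonneg_right (le_abs_self (C_d i)) (norm_nonneg (eu t)))
            (norm_nonneg (dl i t - dl i 0))
          linarith
        have b5 : |C_d i| * ‖eu t‖ * ‖dl i t - dl i 0‖
            ≤ |C_d i| * ‖eu t‖ * (τ * S i * t) :=
          mul_le_mul_of_nonneg_left b3 (mul_nonneg (abs_nonneg _) (norm_nonneg _))
        linarith
      calc (∑ i, d i (eu t) (dl i t - dl i 0))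
          ≤ ∑ i, |C_d i| * ‖eu t‖ * (τ * S i * t) := Finset.sum_le_sum fun i _ => hper i
        _ = ‖eu t‖ * ∑ i, |C_d i| * (τ * S i * t) := by
            rw [Finset.mul_sum]
            exact Finset.sum_congr rfl fun i _ => by ring
    have hσ1nn : 0 ≤ ∑ i, |C_d i| * ‖ep i t‖ :=
      Finset.sum_nonneg fun i _ => mul_nonneg (abs_nonneg _) (norm_nonneg _)
    have hσ2nn : 0 ≤ ∑ i, |C_d i| * (τ * S i * t) :=
      Finset.sum_nonneg fun i _ => mul_nonneg (abs_nonneg _)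
        (mul_nonneg (mul_nonneg hτ' (hSnn i)) ht.1)
    have hca : c_a * ‖eu t‖^2
        ≤ ‖eu t‖ * ((∑ i, |C_d i| * ‖ep i t‖) + ∑ i, |C_d i| * (τ * S i * t)) := by
      have := ha_coer (eu t)
      rw [h2] at this
      calc c_a * ‖eu t‖^2 ≤ (∑ i, d i (eu t) (ep i t)) + ∑ i, d i (eu t) (dl i t - dl i 0) :=
            this
        _ ≤ ‖eu t‖ * ((∑ i, |C_d i| * ‖ep i t‖) + ∑ i, |C_d i| * (τ * S i * t)) := by
            rw [mul_add]
            exact add_le_add hb1 hb2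
    have hx : c_a^2*‖eu t‖^2
        ≤ ((∑ i, |C_d i| * ‖ep i t‖) + ∑ i, |C_d i| * (τ * S i * t))^2 := by
      have h4 := mul_le_mul_of_nonneg_left hca hc_a.le
      have h5 := sq_nonneg (c_a*‖eu t‖
        - ((∑ i, |C_d i| * ‖ep i t‖) + ∑ i, |C_d i| * (τ * S i * t)))
      linarith [h4, h5]
    have hσ1sq : (∑ i, |C_d i| * ‖ep i t‖)^2 ≤ Cd2 * phi t := by
      rw [hCd2_def, hphi_def]
      have h1 := Finset.sum_mul_sq_le_sq_mul_sq Finset.univ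
        (fun i => |C_d i|) (fun i => ‖ep i t‖)
      simpa [sq_abs] using h1
    have hσ2sq : (∑ i, |C_d i| * (τ * S i * t))^2 ≤ Cd2 * (τ^2*t^2*P2) := by
      have h1 := Finset.sum_mul_sq_le_sq_mul_sq Finset.univ
        (fun i => |C_d i|) (fun i => τ * S i * t)
      have h2 : (∑ i, (τ * S i * t)^2) = τ^2*t^2*P2 := by
        rw [hP2_def, Finset.mul_sum]
        exact Finset.sum_congr rfl fun i _ => by ring
      have h3 : (∑ i, |C_d i|^2) = Cd2 := by
        rw [hCd2_def]
        exact Finset.sum_congr rfl fun i _ => sq_abs _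
      rw [← h2, ← h3]
      simpa using h1
    have hsum : ((∑ i, |C_d i| * ‖ep i t‖) + ∑ i, |C_d i| * (τ * S i * t))^2
        ≤ 2*Cd2*(phi t + τ^2*t^2*P2) := by
      have h6 := sq_nonneg ((∑ i, |C_d i| * ‖ep i t‖) - ∑ i, |C_d i| * (τ * S i * t))
      linarith [hσ1sq, hσ2sq, h6]
    have hfin : c_a^2*‖eu t‖^2 ≤ 2*Cd2*(phi t + τ^2*t^2*P2) := le_trans hx hsum
    rw [div_mul_eq_mul_div, le_div_iff₀ (by positivity : (0:ℝ) < c_a^2)]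
    calc ‖eu t‖^2 * c_a^2 = c_a^2*‖eu t‖^2 := by ring
      _ ≤ 2*Cd2*(phi t + τ^2*t^2*P2) := hfin
      _ = 2*Cd2*(phi t + τ^2*t^2*P2) := rfl
  -- numerator bound for K1s
  have hnum : (∑ i, |C_d i| * S i)^2 ≤ Cd2 * P2 := by
    rw [hCd2_def, hP2_def]
    have h1 := Finset.sum_mul_sq_le_sq_mul_sq Finset.univ (fun i => |C_d i|) (fun i => S i)
    simpa [sq_abs] using h1
  have hK1sb : K1s ≤ Cd2 * P2 / (4*c_a) := by
    rw [hK1s_def, div_le_div_iff₀ (by positivity) (by positivity)]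
    exact mul_le_mul_of_nonneg_right hnum (by positivity)
  have hAb : Agr ≤ c₃ * (τ^2*Pb) := by
    have h1 : Agr ≤ 2*τ^2*(Cd2 * P2 / (4*c_a))/c_c*T := by
      rw [hAgr_def]
      gcongr
    have h2 : 2*τ^2*(Cd2 * P2 / (4*c_a))/c_c*T = (Cd2/(2*c_a*c_c))*(τ^2*(T*P2)) := by
      field_simp
      ring
    have h3 : (Cd2/(2*c_a*c_c))*(τ^2*(T*P2)) ≤ (Cd2/(2*c_a*c_c))*(τ^2*Pb) := by
      refine mul_le_mul_of_nonneg_left ?_ (by rw [← hc₃_def]; exact hc₃)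
      exact mul_le_mul_of_nonneg_left hTP2 (sq_nonneg τ)
    rw [hc₃_def]
    calc Agr ≤ 2*τ^2*(Cd2 * P2 / (4*c_a))/c_c*T := h1
      _ = (Cd2/(2*c_a*c_c))*(τ^2*(T*P2)) := h2
      _ ≤ (Cd2/(2*c_a*c_c))*(τ^2*Pb) := h3
  -- final assembly
  intro t ht
  set X : ℝ := (3 + 2/c_c^2) * (1 + 4 * (m:ℝ)^2 * β^2) with hX_def
  set E : ℝ := Real.exp (X * t) with hE_def
  have he1 : lam = 1 + (4*(m:ℝ)^2*β^2)*(1/c_c^2) := by rw [hlam_def]; ring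
  have he2 : X = (3+2*(1/c_c^2))*(1+4*(m:ℝ)^2*β^2) := by rw [hX_def]; ring
  have hXlam : lam ≤ X := by
    have h9 := (aux_X (B := 4*(m:ℝ)^2*β^2) (C := 1/c_c^2) (by positivity) (by positivity)).1
    rw [he1, he2]
    exact h9
  have hX3 : 2*lam + 1 ≤ X := by
    have h9 := (aux_X (B := 4*(m:ℝ)^2*β^2) (C := 1/c_c^2) (by positivity) (by positivity)).2
    rw [he1, he2]
    exact h9
  have hX1 : 1 ≤ X := le_trans hlam1 hXlam
  have hexp1 : Real.exp (lam*t) ≤ E := by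
    rw [hE_def]
    exact Real.exp_le_exp.mpr (mul_le_mul_of_nonneg_right hXlam ht.1)
  have htE : t ≤ E := by
    have h1 : t ≤ Real.exp t := by linarith [Real.add_one_le_exp t]
    have h2 : Real.exp t ≤ E := by
      rw [hE_def]
      refine Real.exp_le_exp.mpr ?_
      have h9 := mul_nonneg (sub_nonneg.mpr hX1) ht.1
      linarith [h9]
    linarith
  have htexp : t * Real.exp (lam*t) ≤ E := by
    have h1 : t ≤ Real.exp t := by linarith [Real.add_one_le_exp t]
    have h2 : t * Real.exp (lam*t) ≤ Real.exp t * Real.exp (lam*t) :=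
      mul_le_mul_of_nonneg_right h1 (Real.exp_pos _).le
    have h3 : Real.exp t * Real.exp (lam*t) = Real.exp (t + lam*t) := (Real.exp_add _ _).symm
    have h4 : Real.exp (t + lam*t) ≤ E := by
      rw [hE_def]
      refine Real.exp_le_exp.mpr ?_
      have h9 : (0:ℝ) ≤ X - (1 + lam) := by linarith
      have h10 := mul_nonneg h9 ht.1
      linarith [h10]
    linarith [h2, h3.le, h3.ge]
  have hq2 : (lam - 1)*(t^2*Real.exp (lam*t)) ≤ E := by
    have w1 : lam*t ≤ Real.exp (lam*t) := by linarith [Real.add_one_le_exp (lam*t)]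
    have w2 : (lam-1)*t ≤ Real.exp (lam*t) := by
      have h9 : (lam-1)*t = lam*t - t := by ring
      linarith [w1, ht.1, h9]
    have w4 : ((lam-1)*t)*(t*Real.exp (lam*t)) ≤ Real.exp (lam*t)*(t*Real.exp (lam*t)) :=
      mul_le_mul_of_nonneg_right w2 (mul_nonneg ht.1 (Real.exp_pos _).le)
    have w5 : Real.exp (lam*t)*(t*Real.exp (lam*t))
        = t*Real.exp (lam*t + lam*t) := by
      rw [Real.exp_add]
      ring
    have w7 : t ≤ Real.exp t := by linarith [Real.add_one_le_exp t]
    have w8 : t*Real.exp (lam*t + lam*t) ≤ Real.exp t * Real.exp (lam*t + lam*t) :=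
      mul_le_mul_of_nonneg_right w7 (Real.exp_pos _).le
    have w9 : Real.exp t * Real.exp (lam*t + lam*t) = Real.exp (t + (lam*t + lam*t)) :=
      (Real.exp_add _ _).symm
    have w10 : Real.exp (t + (lam*t + lam*t)) ≤ E := by
      rw [hE_def]
      refine Real.exp_le_exp.mpr ?_
      have h9 : (0:ℝ) ≤ X - (2*lam + 1) := by linarith
      have h10 := mul_nonneg h9 ht.1
      linarith [h10]
    have w11 : (lam - 1)*(t^2*Real.exp (lam*t)) = ((lam-1)*t)*(t*Real.exp (lam*t)) := by ring
    calc (lam - 1)*(t^2*Real.exp (lam*t)) = ((lam-1)*t)*(t*Real.exp (lam*t)) := w11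
      _ ≤ Real.exp (lam*t)*(t*Real.exp (lam*t)) := w4
      _ = t*Real.exp (lam*t + lam*t) := w5
      _ ≤ Real.exp t * Real.exp (lam*t + lam*t) := w8
      _ = Real.exp (t + (lam*t + lam*t)) := w9
      _ ≤ E := w10
  have hEnn : 0 ≤ E := by rw [hE_def]; positivity
  have ht2 : t^2 ≤ T*E := by
    have h1 : t*t ≤ t*T := mul_le_mul_of_nonneg_left ht.2 ht.1
    have h2 : t*T ≤ E*T := mul_le_mul_of_nonneg_right htE hT'
    have e1 : t^2 = t*t := by ring
    have e2 : E*T = T*E := by ring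
    linarith
  -- bounds at time t
  have hphiB : phi t ≤ c₃ * (τ^2*Pb) * E := by
    have h1 := hgrb t ht
    have h3 : Agr * Real.exp (lam*t) ≤ (c₃*(τ^2*Pb)) * Real.exp (lam*t) :=
      mul_le_mul_of_nonneg_right hAb (Real.exp_pos _).le
    have h4 : (c₃*(τ^2*Pb)) * Real.exp (lam*t) ≤ (c₃*(τ^2*Pb)) * E :=
      mul_le_mul_of_nonneg_left hexp1 (mul_nonneg hc₃ (mul_nonneg (sq_nonneg τ) hPbnn))
    linarith
  have heuB : ‖eu t‖^2 ≤ (2*Cd2/c_a^2)*(c₃+1) * (τ^2*Pb*E) := by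
    have h1 := heub t ht
    have h2 : τ^2*t^2*P2 ≤ τ^2*(Pb*E) := by
      have c1 : t^2*P2 ≤ (T*E)*P2 := mul_le_mul_of_nonneg_right ht2 hP2nn
      have c2 : (T*E)*P2 = (T*P2)*E := by ring
      have c4 : (T*P2)*E ≤ Pb*E := mul_le_mul_of_nonneg_right hTP2 hEnn
      have c5 : τ^2*(t^2*P2) ≤ τ^2*(Pb*E) := by
        refine mul_le_mul_of_nonneg_left ?_ (sq_nonneg τ)
        linarith
      have e1 : τ^2*t^2*P2 = τ^2*(t^2*P2) := by ring
      linarith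
    have e2 : (c₃+1)*(τ^2*Pb*E) = c₃*(τ^2*Pb)*E + τ^2*(Pb*E) := by ring
    have h4 : phi t + τ^2*t^2*P2 ≤ (c₃+1)*(τ^2*Pb*E) := by linarith [hphiB, h2, e2]
    calc ‖eu t‖^2 ≤ 2*Cd2/c_a^2 * (phi t + τ^2*t^2*P2) := h1
      _ ≤ 2*Cd2/c_a^2 * ((c₃+1)*(τ^2*Pb*E)) := by
          refine mul_le_mul_of_nonneg_left h4 ?_
          exact div_nonneg (by linarith) (by positivity)
      _ = (2*Cd2/c_a^2)*(c₃+1) * (τ^2*Pb*E) := by ring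
  have hIYB : (∫ s in (0:ℝ)..t, Yf s)
      ≤ (Cd2/(2*c_a))*(τ^2*Pb*E) + c_c*c₃*(τ^2*Pb*E) := by
    have h1 := hIY t ht
    have h2 : t * (2*(τ^2*K1s*t) + 2*(K2 * (t * (Agr * Real.exp (lam*t)))))
        = 2*τ^2*(K1s*t^2) + (2*K2) * Agr * (t^2*Real.exp (lam*t)) := by ring
    have h3 : 2*τ^2*(K1s*t^2) ≤ (Cd2/(2*c_a))*(τ^2*Pb*E) := by
      have hbnn : 0 ≤ Cd2*P2/(4*c_a) := div_nonneg (mul_nonneg hCd2 hP2nn) (by positivity)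
      have c1 : K1s*t^2 ≤ (Cd2*P2/(4*c_a))*(T*E) := mul_le_mul hK1sb ht2 (sq_nonneg t) hbnn
      have c2 : 2*τ^2*(K1s*t^2) ≤ 2*τ^2*((Cd2*P2/(4*c_a))*(T*E)) :=
        mul_le_mul_of_nonneg_left c1 (by positivity)
      have c3 : 2*τ^2*((Cd2*P2/(4*c_a))*(T*E)) = (Cd2/(2*c_a))*(τ^2*((T*P2)*E)) := by
        field_simp
        ring
      have c4 : (T*P2)*E ≤ Pb*E := mul_le_mul_of_nonneg_right hTP2 hEnn
      have c5 : (Cd2/(2*c_a))*(τ^2*((T*P2)*E)) ≤ (Cd2/(2*c_a))*(τ^2*(Pb*E)) := by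
        refine mul_le_mul_of_nonneg_left ?_ (div_nonneg hCd2 (by positivity))
        exact mul_le_mul_of_nonneg_left c4 (sq_nonneg τ)
      have c7 : (Cd2/(2*c_a))*(τ^2*(Pb*E)) = (Cd2/(2*c_a))*(τ^2*Pb*E) := by ring
      linarith
    have h4 : (2*K2) * Agr * (t^2*Real.exp (lam*t)) ≤ c_c*c₃*(τ^2*Pb*E) := by
      have heq2K : 2*K2 = c_c*(lam-1) := by
        rw [hK2_def, hlam_def]
        field_simp
        ring
      have c4 : (2*K2) * Agr * (t^2*Real.exp (lam*t))
          = c_c*Agr*((lam-1)*(t^2*Real.exp (lam*t))) := by rw [heq2K]; ring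
      have c5 : c_c*Agr*((lam-1)*(t^2*Real.exp (lam*t))) ≤ c_c*Agr*E :=
        mul_le_mul_of_nonneg_left hq2 (mul_nonneg hc_c.le hAgrnn)
      have c6 : c_c*Agr*E ≤ c_c*(c₃*(τ^2*Pb))*E := by
        have c8 := mul_le_mul_of_nonneg_right
          (mul_le_mul_of_nonneg_left hAb hc_c.le) hEnn
        linarith
      have c7 : c_c*(c₃*(τ^2*Pb))*E = c_c*c₃*(τ^2*Pb*E) := by ring
      linarith
    calc (∫ s in (0:ℝ)..t, Yf s)
        ≤ t * (2*(τ^2*K1s*t) + 2*(K2 * (t * (Agr * Real.exp (lam*t))))) := h1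
      _ = 2*τ^2*(K1s*t^2) + (2*K2) * Agr * (t^2*Real.exp (lam*t)) := h2
      _ ≤ (Cd2/(2*c_a))*(τ^2*Pb*E) + c_c*c₃*(τ^2*Pb*E) := add_le_add h3 h4
  -- final combination
  have hm1 : (1:ℝ) ≤ (m:ℝ) := by exact_mod_cast hm
  have hfinal : ‖eu t‖^2 + phi t + (∫ s in (0:ℝ)..t, Yf s)
      ≤ (c₃ + (2*Cd2/c_a^2)*(c₃+1) + Cd2/(2*c_a) + c_c*c₃ + 1) * τ^2 * (m:ℝ) * (1+E) * Pb := by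
    have e9 : (c₃ + (2*Cd2/c_a^2)*(c₃+1) + Cd2/(2*c_a) + c_c*c₃) * (τ^2*Pb*E)
        = c₃*(τ^2*Pb)*E + (2*Cd2/c_a^2)*(c₃+1)*(τ^2*Pb*E)
          + (Cd2/(2*c_a))*(τ^2*Pb*E) + c_c*c₃*(τ^2*Pb*E) := by ring
    have h1 : ‖eu t‖^2 + phi t + (∫ s in (0:ℝ)..t, Yf s)
        ≤ (c₃ + (2*Cd2/c_a^2)*(c₃+1) + Cd2/(2*c_a) + c_c*c₃) * (τ^2*Pb*E) := by
      have h0 := add_le_add (add_le_add heuB hphiB) hIYB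
      have e8 : (2*Cd2/c_a^2)*(c₃+1) * (τ^2*Pb*E) + c₃ * (τ^2*Pb) * E
          + ((Cd2/(2*c_a))*(τ^2*Pb*E) + c_c*c₃*(τ^2*Pb*E))
          = (c₃ + (2*Cd2/c_a^2)*(c₃+1) + Cd2/(2*c_a) + c_c*c₃) * (τ^2*Pb*E) := by ring
      rw [e8] at h0
      exact h0
    have hC1nn : 0 ≤ c₃ + (2*Cd2/c_a^2)*(c₃+1) + Cd2/(2*c_a) + c_c*c₃ := by
      linarith [hc₃, hterm1, hterm2, hterm3]
    have hpe : 0 ≤ τ^2*Pb := mul_nonneg (sq_nonneg τ) hPbnn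
    have h2 : (c₃ + (2*Cd2/c_a^2)*(c₃+1) + Cd2/(2*c_a) + c_c*c₃) * (τ^2*Pb*E)
        ≤ (c₃ + (2*Cd2/c_a^2)*(c₃+1) + Cd2/(2*c_a) + c_c*c₃) * (τ^2*Pb*(1+E)) := by
      exact mul_le_mul_of_nonneg_left
        (mul_le_mul_of_nonneg_left (le_add_of_nonneg_left zero_le_one) hpe) hC1nn
    have h3 : (c₃ + (2*Cd2/c_a^2)*(c₃+1) + Cd2/(2*c_a) + c_c*c₃) * (τ^2*Pb*(1+E))
        ≤ (c₃ + (2*Cd2/c_a^2)*(c₃+1) + Cd2/(2*c_a) + c_c*c₃ + 1) * (τ^2*Pb*(1+E)) := by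
      refine mul_le_mul_of_nonneg_right (lt_add_one _).le ?_
      exact mul_nonneg (mul_nonneg (sq_nonneg τ) hPbnn) (add_nonneg zero_le_one hEnn)
    have h4 : (c₃ + (2*Cd2/c_a^2)*(c₃+1) + Cd2/(2*c_a) + c_c*c₃ + 1) * (τ^2*Pb*(1+E))
        ≤ ((c₃ + (2*Cd2/c_a^2)*(c₃+1) + Cd2/(2*c_a) + c_c*c₃ + 1) * (τ^2*Pb*(1+E))) * (m:ℝ) := by
      refine le_mul_of_one_le_right ?_ hm1
      refine mul_nonneg (add_nonneg hC1nn zero_le_one) ?_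
      exact mul_nonneg (mul_nonneg (sq_nonneg τ) hPbnn) (add_nonneg zero_le_one hEnn)
    have h5 : ((c₃ + (2*Cd2/c_a^2)*(c₃+1) + Cd2/(2*c_a) + c_c*c₃ + 1) * (τ^2*Pb*(1+E))) * (m:ℝ)
        = (c₃ + (2*Cd2/c_a^2)*(c₃+1) + Cd2/(2*c_a) + c_c*c₃ + 1) * τ^2 * (m:ℝ) * (1+E) * Pb := by
      ring
    calc ‖eu t‖^2 + phi t + (∫ s in (0:ℝ)..t, Yf s)
        ≤ (c₃ + (2*Cd2/c_a^2)*(c₃+1) + Cd2/(2*c_a) + c_c*c₃) * (τ^2*Pb*E) := h1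
      _ ≤ (c₃ + (2*Cd2/c_a^2)*(c₃+1) + Cd2/(2*c_a) + c_c*c₃) * (τ^2*Pb*(1+E)) := h2
      _ ≤ (c₃ + (2*Cd2/c_a^2)*(c₃+1) + Cd2/(2*c_a) + c_c*c₃ + 1) * (τ^2*Pb*(1+E)) := h3
      _ ≤ ((c₃ + (2*Cd2/c_a^2)*(c₃+1) + Cd2/(2*c_a) + c_c*c₃ + 1) * (τ^2*Pb*(1+E))) * (m:ℝ) := h4
      _ = (c₃ + (2*Cd2/c_a^2)*(c₃+1) + Cd2/(2*c_a) + c_c*c₃ + 1) * τ^2 * (m:ℝ) * (1+E) * Pb := h5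
  -- rewrite the goal in terms of the error quantities
  have heuswap : ‖ubar t - u t‖^2 = ‖eu t‖^2 := by rw [heu_def]
  have hphiswap : (∑ i, ‖pbar i t - p i t‖^2) = phi t := by
    simp only [hphi_def, hep_def]
  have hYswap : (∑ i, ∫ s in (0:ℝ)..t, ‖ιZ (ybar i s - y i s)‖^2)
      = ∫ s in (0:ℝ)..t, Yf s := by
    have hintg : ∀ i ∈ (Finset.univ : Finset (Fin m)),
        IntervalIntegrable (fun s => ‖ιZ (ey i s)‖^2) MeasureTheory.volume 0 t := by
      intro i _
      apply ContinuousOn.intervalIntegrable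
      have hc6 : ContinuousOn (fun s => ιZ (ey i s)) (Icc (0:ℝ) T) :=
        ιZ.continuous.comp_continuousOn (heyc i)
      have hc5 : ContinuousOn (fun s => ‖ιZ (ey i s)‖^2) (Icc (0:ℝ) T) := (hc6.norm).pow 2
      apply hc5.mono
      rw [uIcc_of_le ht.1]
      exact Icc_subset_Icc le_rfl ht.2
    have h2 := (intervalIntegral.integral_finset_sum hintg).symm
    calc (∑ i, ∫ s in (0:ℝ)..t, ‖ιZ (ybar i s - y i s)‖^2)
        = ∑ i, ∫ s in (0:ℝ)..t, ‖ιZ (ey i s)‖^2 := by simp only [hey_def]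
      _ = ∫ s in (0:ℝ)..t, ∑ i, ‖ιZ (ey i s)‖^2 := h2
      _ = ∫ s in (0:ℝ)..t, Yf s := by simp only [hYf_def]
  have hPbswap : (∑ i, (∫ s in (0:ℝ)..T, ‖pbar' i s‖^2))
      + (1+τ^2)*T* ∑ i, (⨆ s : Icc (-τ) T, ‖pbar'' i (s:ℝ)‖)^2 = Pb := by
    simp only [hPb_def, hP2_def, hS_def]
  rw [heuswap, hphiswap, hYswap]
  calc ‖eu t‖^2 + phi t + (∫ s in (0:ℝ)..t, Yf s)
      ≤ (c₃ + (2*Cd2/c_a^2)*(c₃+1) + Cd2/(2*c_a) + c_c*c₃ + 1) * τ^2 * (m:ℝ) * (1+E) * Pb :=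
        hfinal
    _ = (c₃ + (2*Cd2/c_a^2)*(c₃+1) + Cd2/(2*c_a) + c_c*c₃ + 1) * τ^2 * (m:ℝ) * (1+E) *
        ((∑ i, (∫ s in (0:ℝ)..T, ‖pbar' i s‖^2))
          + (1+τ^2)*T* ∑ i, (⨆ s : Icc (-τ) T, ‖pbar'' i (s:ℝ)‖)^2) := by rw [hPbswap]
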